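/- Let (X,d) be a metric space, {Sₙ}ₙ₌₁^∞ a sequence of selfmaps of X, A : X → X continuous, and for each n let uₙ ∈ X satisfy Sₙuₙ = uₙ and Auₙ = uₙ. Suppose there exists φ ∈ Φ such that for each n and all x, y ∈ X: whenever Ax ≠ Ay, d(Sₙx, Sₙy) ≤ φ(max{d(Ax,Ay), d(Ax,Sₙx)·d(Ay,Sₙy)/d(Ax,Ay), d(Ax,Sₙy)·d(Ay,Sₙx)/d(Ax,Ay)}), and whenever d(Ax,Ay) = 0, d(Sₙx, Sₙy) = 0. Suppose {Sₙ} converges pointwise to a selfmap S of X. If uₙ → u as n → ∞, then Au = u and Su = u. -/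

import Mathlib

open Filter Topology

/-- If each `Sₙ` together with continuous `A` satisfies the φ-contractive
inequality, `uₙ` is a common fixed point of `Sₙ` and `A`, `{Sₙ}` converges pointwise to
`S`, and `uₙ → u`, then `Au = u` and `Su = u`. -/
theorem stmt_7 {X : Type*} [MetricSpace X] (Sseq : ℕ → X → X) (S A : X → X)
    (hAcont : Continuous A)
    (u : ℕ → X)
    (hfixS : ∀ n : ℕ, Sseq n (u n) = u n)
    (hfixA : ∀ n : ℕ, A (u n) = u n)
    (φ : ℝ → ℝ)
    (hφc : ContinuousOn φ (Set.Ici 0))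
    (hφm : MonotoneOn φ (Set.Ici 0))
    (hφ0 : ∀ t : ℝ, 0 ≤ t → 0 ≤ φ t)
    (hφlt : ∀ t : ℝ, 0 < t → φ t < t)
    (hc1 : ∀ n : ℕ, ∀ x y : X, A x ≠ A y →
      dist (Sseq n x) (Sseq n y) ≤ φ (max (dist (A x) (A y))
        (max (dist (A x) (Sseq n x) * dist (A y) (Sseq n y) / dist (A x) (A y))
             (dist (A x) (Sseq n y) * dist (A y) (Sseq n x) / dist (A x) (A y)))))
    (hc2 : ∀ n : ℕ, ∀ x y : X, dist (A x) (A y) = 0 → dist (Sseq n x) (Sseq n y) = 0)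
    (hptwise : ∀ y : X, Tendsto (fun n => Sseq n y) atTop (𝓝 (S y)))
    (w : X) (hconv : Tendsto u atTop (𝓝 w)) :
    A w = w ∧ S w = w := by
  -- A w = w
  have hAw : A w = w := by
    have h1 : Tendsto (fun n => A (u n)) atTop (𝓝 (A w)) :=
      (hAcont.tendsto w).comp hconv
    have h2 : Tendsto (fun n => A (u n)) atTop (𝓝 w) := by
      simpa [hfixA] using hconv
    exact tendsto_nhds_unique h1 h2
  -- φ t ≤ t for t ≥ 0
  have hφle : ∀ t : ℝ, 0 ≤ t → φ t ≤ t := by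
    intro t ht
    rcases ht.eq_or_lt with h | h
    · have h0 : φ 0 ≤ 0 := by
        refine le_of_forall_pos_le_add ?_
        intro ε hε
        have := hφm (Set.mem_Ici.2 le_rfl) (Set.mem_Ici.2 hε.le) hε.le
        have := this.trans (hφlt ε hε).le
        linarith
      rw [← h]; exact h0
    · exact (hφlt t h).le
  have key : ∀ n, dist (Sseq n w) (u n) ≤ dist w (u n) := by
    intro n
    by_cases h0 : dist (A w) (A (u n)) = 0
    · have := hc2 n w (u n) h0
      rw [hfixS n] at this
      rw [this]
      exact dist_nonneg
    · have hne : A w ≠ A (u n) := fun h => h0 (by rw [h, dist_self])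
      have hb := hc1 n w (u n) hne
      rw [hAw, hfixA n, hfixS n] at hb
      have hd : dist w (u n) ≠ 0 := by rwa [hAw, hfixA n] at h0
      have hdpos : 0 < dist w (u n) := lt_of_le_of_ne dist_nonneg (Ne.symm hd)
      have e2 : dist w (Sseq n w) * dist (u n) (u n) / dist w (u n) = 0 := by
        simp
      have e3 : dist w (u n) * dist (u n) (Sseq n w) / dist w (u n)
          = dist (u n) (Sseq n w) := by
        field_simp
      rw [e2, e3] at hb
      set D := dist w (u n) with hD
      set E := dist (u n) (Sseq n w) with hE
      have hEnn : (0:ℝ) ≤ E := dist_nonneg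
      rw [max_eq_right hEnn] at hb
      rcases le_total E D with hED | hDE
      · rw [max_eq_left hED] at hb
        exact hb.trans (hφle D hdpos.le)
      · rw [max_eq_right hDE] at hb
        rcases hEnn.eq_or_lt with hE0 | hE0
        · rw [← hE0] at hb
          calc dist (Sseq n w) (u n) ≤ φ 0 := hb
            _ ≤ 0 := hφle 0 le_rfl
            _ ≤ D := hdpos.le
        · exfalso
          have : dist (Sseq n w) (u n) < E := hb.trans_lt (hφlt E hE0)
          rw [hE, dist_comm] at this
          exact lt_irrefl _ this
  have hSw : S w = w := by
    have h1 : Tendsto (fun n => dist (Sseq n w) (u n)) atTop (𝓝 (dist (S w) w)) :=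
      (hptwise w).dist hconv
    have h2 : Tendsto (fun n => dist w (u n)) atTop (𝓝 0) := by
      simpa using (tendsto_const_nhds.dist hconv : Tendsto (fun n => dist w (u n)) atTop (𝓝 (dist w w)))
    have hle : dist (S w) w ≤ 0 :=
      le_of_tendsto_of_tendsto' h1 h2 key
    exact dist_le_zero.mp (le_antisymm hle dist_nonneg).le
  exact ⟨hAw, hSw⟩
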